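/- For every ψ ∈ Γ, the function ψ*(x) := ⟨(1-x)^{-⊗1} ∣ ψ⟩ is analytic on the open unit ball B of E, and its n-th Taylor coefficient at zero equals the n-homogeneous Hilbert-Schmidt polynomial x ↦ ⟨x^{⊗n} ∣ ψ_n⟩, where ψ = ⊕_n ψ_n with ψ_n ∈ E^{⊙n}. -/

import Mathlib

open scoped Nat
/-- A model of the completed `n`-th *symmetric* tensor power `E^{⊙n}` of a complex
inner product space `E`: a space `T` with a map `tpow : x ↦ x^{⊗n}` satisfying
`⟨x^{⊗n}, y^{⊗n}⟩ = ⟨x,y⟩ⁿ`, the diagonal tensors being total in `T`. -/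
structure SymPowModel (E : Type) [NormedAddCommGroup E] [InnerProductSpace ℂ E]
    (n : ℕ) (T : Type) [NormedAddCommGroup T] [InnerProductSpace ℂ T] where
  tpow : E → T
  inner_tpow : ∀ x y : E, (inner ℂ (tpow x) (tpow y) : ℂ) = (inner ℂ x y : ℂ) ^ n
  total : (Submodule.span ℂ (Set.range tpow)).topologicalClosure = ⊤

namespace FockAux

open Finset


noncomputable def sgn (b : Bool) : ℂ := if b then 1 else -1

lemma conj_sgn (b : Bool) : (starRingEnd ℂ) (sgn b) = sgn b := by
  cases b <;> simp [sgn]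

lemma sum_sgn_pow (m : ℕ) : ∑ b : Bool, sgn b ^ m = if Even m then 2 else 0 := by
  rcases Nat.even_or_odd m with h | h
  · simp only [Fintype.sum_bool, sgn, if_pos, if_neg, Bool.false_eq_true, not_false_iff,
      ite_true, ite_false, one_pow, h.neg_one_pow, if_pos h]
    norm_num
  · simp only [Fintype.sum_bool, sgn, ite_true, ite_false, one_pow,
      if_neg (Nat.not_even_iff_odd.mpr h)]
    norm_num [h.neg_one_pow]

/-- number of bijections of `Fin n` -/
def K (n : ℕ) : ℕ := (univ.filter fun r : Fin n → Fin n => Function.Bijective r).card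

lemma K_pos (n : ℕ) : 0 < K n := by
  apply Finset.card_pos.mpr
  exact ⟨id, Finset.mem_filter.mpr ⟨Finset.mem_univ _, Function.bijective_id⟩⟩

lemma sum_sgn_mul (n : ℕ) (r : Fin n → Fin n) :
    ∑ ε : Fin n → Bool, ((∏ j, sgn (ε j)) * ∏ j, sgn (ε (r j)))
      = if Function.Bijective r then (2 : ℂ) ^ n else 0 := by
  classical
  have h1 : ∀ ε : Fin n → Bool,
      (∏ j, sgn (ε j)) * ∏ j, sgn (ε (r j))
        = ∏ j, sgn (ε j) ^ ((univ.filter fun i => r i = j).card + 1) := by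
    intro ε
    have h2 : ∏ i, sgn (ε (r i)) = ∏ j, sgn (ε j) ^ (univ.filter fun i => r i = j).card := by
      rw [← Finset.prod_fiberwise univ r (fun i => sgn (ε (r i)))]
      refine Finset.prod_congr rfl fun j _ => ?_
      rw [Finset.prod_congr rfl (fun i hi => ?_), Finset.prod_const]
      · rw [(Finset.mem_filter.mp hi).2]
    rw [h2, ← Finset.prod_mul_distrib]
    exact Finset.prod_congr rfl fun j _ => (pow_succ' _ _).symm
  simp only [h1]
  have h3 : ∑ ε : Fin n → Bool, ∏ j, sgn (ε j) ^ ((univ.filter fun i => r i = j).card + 1)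
      = ∏ j, ∑ b : Bool, sgn b ^ ((univ.filter fun i => r i = j).card + 1) := by
    rw [Finset.prod_univ_sum, Fintype.piFinset_univ]
  rw [h3]
  by_cases hb : Function.Bijective r
  · rw [if_pos hb]
    have hcard : ∀ j, (univ.filter fun i => r i = j).card = 1 := by
      intro j
      have : (univ.filter fun i => r i = j) = {(Equiv.ofBijective r hb).symm j} := by
        ext i
        simp only [Finset.mem_filter, Finset.mem_univ, true_and, Finset.mem_singleton]
        constructor
        · intro h; rw [← h]; exact ((Equiv.ofBijective r hb).symm_apply_apply i).symm
        · intro h; rw [h]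
          exact (Equiv.ofBijective r hb).apply_symm_apply j
      rw [this, Finset.card_singleton]
    calc ∏ j, ∑ b : Bool, sgn b ^ ((univ.filter fun i => r i = j).card + 1)
        = ∏ _j : Fin n, (2 : ℂ) := by
          refine Finset.prod_congr rfl fun j _ => ?_
          rw [hcard j, sum_sgn_pow]
          norm_num
      _ = 2 ^ n := by simp
  · rw [if_neg hb]
    have hsurj : ¬ Function.Surjective r := by
      intro hs
      exact hb ((Fintype.bijective_iff_surjective_and_card r).mpr ⟨hs, rfl⟩)
    rw [Function.Surjective] at hsurj
    push_neg at hsurj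
    obtain ⟨j0, hj0⟩ := hsurj
    apply Finset.prod_eq_zero (Finset.mem_univ j0)
    have : (univ.filter fun i => r i = j0) = ∅ := by
      apply Finset.filter_eq_empty_iff.mpr
      intro i _
      exact hj0 i
    rw [this, Finset.card_empty, sum_sgn_pow]
    norm_num

lemma polar_sum (n : ℕ) (A : Fin n → Fin n → ℂ) :
    ∑ ε : Fin n → Bool, (∏ j, sgn (ε j)) * ∏ j, (∑ k, sgn (ε k) * A k j)
      = 2 ^ n * ∑ r ∈ univ.filter (fun r : Fin n → Fin n => Function.Bijective r),
          ∏ j, A (r j) j := by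
  classical
  have h1 : ∀ ε : Fin n → Bool,
      (∏ j, sgn (ε j)) * ∏ j, (∑ k, sgn (ε k) * A k j)
        = ∑ r : Fin n → Fin n, (∏ j, A (r j) j) * ((∏ j, sgn (ε j)) * ∏ j, sgn (ε (r j))) := by
    intro ε
    rw [Finset.prod_univ_sum (fun _ => (univ : Finset (Fin n))) (fun j k => sgn (ε k) * A k j),
      Fintype.piFinset_univ, Finset.mul_sum]
    refine Finset.sum_congr rfl fun r _ => ?_
    rw [Finset.prod_mul_distrib]
    ring
  simp only [h1]
  rw [Finset.sum_comm]
  have h2 : ∀ r : Fin n → Fin n,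
      ∑ ε : Fin n → Bool, (∏ j, A (r j) j) * ((∏ j, sgn (ε j)) * ∏ j, sgn (ε (r j)))
        = (∏ j, A (r j) j) * (if Function.Bijective r then (2:ℂ)^n else 0) := by
    intro r
    rw [← Finset.mul_sum, sum_sgn_mul]
  simp only [h2, mul_ite, mul_zero]
  rw [Finset.sum_ite, Finset.sum_const_zero, add_zero, Finset.mul_sum]
  exact Finset.sum_congr rfl fun r _ => mul_comm _ _

lemma polar_sum_pow (n : ℕ) (a : Fin n → ℂ) :
    ∑ ε : Fin n → Bool, (∏ j, sgn (ε j)) * (∑ k, sgn (ε k) * a k) ^ n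
      = 2 ^ n * (K n : ℂ) * ∏ j, a j := by
  classical
  have h1 := polar_sum n (fun k _ => a k)
  have h2 : ∀ ε : Fin n → Bool, ∏ _j : Fin n, (∑ k, sgn (ε k) * a k)
      = (∑ k, sgn (ε k) * a k) ^ n := by
    intro ε; rw [Finset.prod_const, Finset.card_univ, Fintype.card_fin]
  simp only [h2] at h1
  rw [h1]
  have h3 : ∀ r ∈ univ.filter (fun r : Fin n → Fin n => Function.Bijective r),
      ∏ j, a (r j) = ∏ j, a j := by
    intro r hr
    exact Fintype.prod_bijective r (Finset.mem_filter.mp hr).2 _ _ (fun i => rfl)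
  rw [Finset.sum_congr rfl h3, Finset.sum_const, nsmul_eq_mul]
  rw [K]
  ring




local notation "⟪" x ", " y "⟫" => @inner ℂ _ _ x y

variable {E : Type} [NormedAddCommGroup E] [InnerProductSpace ℂ E]
  {n : ℕ} {T : Type} [NormedAddCommGroup T] [InnerProductSpace ℂ T]

/-- totality: a vector orthogonal to all `tpow y` vanishes -/
lemma model_eq_zero (M : SymPowModel E n T) {W : T}
    (h : ∀ y : E, ⟪M.tpow y, W⟫ = 0) : W = 0 := by
  have hsub : (↑(Submodule.span ℂ (Set.range M.tpow)) : Set T) ⊆ {v : T | ⟪v, W⟫ = 0} := by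
    intro v hv
    induction hv using Submodule.span_induction with
    | mem v hv => obtain ⟨y, rfl⟩ := hv; exact h y
    | zero => simp
    | add u v _ _ hu hv => simp only [Set.mem_setOf_eq] at *; rw [inner_add_left, hu, hv, add_zero]
    | smul a u _ hu => simp only [Set.mem_setOf_eq] at *; rw [inner_smul_left, hu, mul_zero]
  have hclosed : IsClosed {v : T | ⟪v, W⟫ = 0} :=
    isClosed_eq (Continuous.inner continuous_id continuous_const) continuous_const
  have hW : W ∈ closure (↑(Submodule.span ℂ (Set.range M.tpow)) : Set T) := by
    rw [← Submodule.topologicalClosure_coe, M.total]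
    trivial
  have : ⟪W, W⟫ = 0 := closure_minimal hsub hclosed hW
  exact inner_self_eq_zero.mp this

variable (M : SymPowModel E n T)

noncomputable def Vfun (x : Fin n → E) : T :=
  ((2 ^ n * K n : ℕ) : ℂ)⁻¹ •
    ∑ ε : Fin n → Bool, (∏ j, sgn (ε j)) • M.tpow (∑ j, sgn (ε j) • x j)

lemma cK_ne_zero : ((2 ^ n * K n : ℕ) : ℂ) ≠ 0 := by
  rw [Nat.cast_ne_zero]
  exact Nat.mul_ne_zero (pow_ne_zero n two_ne_zero) (K_pos n).ne'

lemma inner_tpow_Vfun (y : E) (x : Fin n → E) :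
    ⟪M.tpow y, Vfun M x⟫ = ∏ j, ⟪y, x j⟫ := by
  rw [Vfun, inner_smul_right, inner_sum]
  have h1 : ∀ ε : Fin n → Bool,
      ⟪M.tpow y, (∏ j, sgn (ε j)) • M.tpow (∑ j, sgn (ε j) • x j)⟫
        = (∏ j, sgn (ε j)) * (∑ k, sgn (ε k) * ⟪y, x k⟫) ^ n := by
    intro ε
    rw [inner_smul_right, M.inner_tpow, inner_sum]
    simp only [inner_smul_right]
  rw [Finset.sum_congr rfl fun ε _ => h1 ε, polar_sum_pow]
  have h2 : ((2 ^ n * K n : ℕ) : ℂ) ≠ 0 := cK_ne_zero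
  push_cast at h2 ⊢
  field_simp
  exact mul_div_cancel_left₀ _ (by exact_mod_cast (K_pos n).ne')

lemma Vfun_diag (x : E) : Vfun M (fun _ => x) = M.tpow x := by
  have h : ∀ y : E, ⟪M.tpow y, Vfun M (fun _ => x) - M.tpow x⟫ = 0 := by
    intro y
    rw [inner_sub_right, inner_tpow_Vfun, M.inner_tpow, Finset.prod_const,
      Finset.card_univ, Fintype.card_fin, sub_self]
  have := model_eq_zero M h
  rwa [sub_eq_zero] at this

lemma inner_Vfun_Vfun (x y : Fin n → E) :
    ⟪Vfun M x, Vfun M y⟫ = ((K n : ℂ))⁻¹ *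
      ∑ r ∈ univ.filter (fun r : Fin n → Fin n => Function.Bijective r),
        ∏ j, ⟪x (r j), y j⟫ := by
  rw [Vfun, inner_smul_left, sum_inner]
  have h1 : ∀ ε : Fin n → Bool,
      ⟪(∏ j, sgn (ε j)) • M.tpow (∑ j, sgn (ε j) • x j), Vfun M y⟫
        = (∏ j, sgn (ε j)) * ∏ j, (∑ k, sgn (ε k) * ⟪x k, y j⟫) := by
    intro ε
    rw [inner_smul_left, inner_tpow_Vfun, map_prod]
    simp only [conj_sgn]
    congr 1
    refine Finset.prod_congr rfl fun j _ => ?_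
    rw [sum_inner]
    simp only [inner_smul_left, conj_sgn]
  rw [Finset.sum_congr rfl fun ε _ => h1 ε, polar_sum]
  rw [map_inv₀, map_natCast]
  have h2 : ((2 ^ n * K n : ℕ) : ℂ) ≠ 0 := cK_ne_zero
  push_cast at h2 ⊢
  have h3 : (2:ℂ) ^ n ≠ 0 := pow_ne_zero n two_ne_zero
  have h4 : (K n : ℂ) ≠ 0 := by
    intro h; exact h2 (by rw [h, mul_zero])
  field_simp

lemma norm_Vfun_le (x : Fin n → E) : ‖Vfun M x‖ ≤ ∏ j, ‖x j‖ := by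
  have hsq : ‖Vfun M x‖ ^ 2 ≤ (∏ j, ‖x j‖) ^ 2 := by
    have h0 : (⟪Vfun M x, Vfun M x⟫ : ℂ) = (‖Vfun M x‖ : ℂ) ^ 2 :=
      inner_self_eq_norm_sq_to_K (Vfun M x)
    have h1 : ‖Vfun M x‖ ^ 2 = ‖(⟪Vfun M x, Vfun M x⟫ : ℂ)‖ := by
      rw [h0]
      rw [norm_pow, Complex.norm_real, norm_norm]
    rw [h1, inner_Vfun_Vfun]
    have h2 : ‖((K n : ℂ))⁻¹ *
        ∑ r ∈ univ.filter (fun r : Fin n → Fin n => Function.Bijective r),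
          ∏ j, ⟪x (r j), x j⟫‖
        ≤ ((K n : ℝ))⁻¹ * ∑ r ∈ univ.filter (fun r : Fin n → Fin n => Function.Bijective r),
            ∏ j, (‖x (r j)‖ * ‖x j‖) := by
      rw [norm_mul, norm_inv]
      have hKn : ‖((K n : ℂ))‖ = (K n : ℝ) := by
        rw [Complex.norm_natCast]
      rw [hKn]
      refine mul_le_mul_of_nonneg_left ?_ (by positivity)
      calc ‖∑ r ∈ univ.filter (fun r : Fin n → Fin n => Function.Bijective r),
            ∏ j, ⟪x (r j), x j⟫‖
          ≤ ∑ r ∈ univ.filter (fun r : Fin n → Fin n => Function.Bijective r),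
            ‖∏ j, ⟪x (r j), x j⟫‖ := norm_sum_le _ _
        _ ≤ _ := by
            refine Finset.sum_le_sum fun r _ => ?_
            rw [norm_prod]
            exact Finset.prod_le_prod (fun j _ => norm_nonneg _)
              (fun j _ => norm_inner_le_norm _ _)
    refine h2.trans ?_
    have h3 : ∀ r ∈ univ.filter (fun r : Fin n → Fin n => Function.Bijective r),
        ∏ j, (‖x (r j)‖ * ‖x j‖) = (∏ j, ‖x j‖) ^ 2 := by
      intro r hr
      have hb : ∏ j, ‖x (r j)‖ = ∏ j, ‖x j‖ :=
        Fintype.prod_bijective r (Finset.mem_filter.mp hr).2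
          (fun j => ‖x (r j)‖) (fun j => ‖x j‖) (fun i => rfl)
      rw [Finset.prod_mul_distrib, hb, sq]
    rw [Finset.sum_congr rfl h3, Finset.sum_const, nsmul_eq_mul, ← mul_assoc, ← K]
    rw [inv_mul_cancel₀ (by exact_mod_cast (K_pos n).ne'), one_mul]
  have h4 : (0:ℝ) ≤ ∏ j, ‖x j‖ := Finset.prod_nonneg fun j _ => norm_nonneg _
  nlinarith [norm_nonneg (Vfun M x)]

lemma prod_inner_update {inst : DecidableEq (Fin n)} (y w : E) (x : Fin n → E) (i : Fin n) :
    (fun j => (⟪y, Function.update x i w j⟫ : ℂ))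
      = Function.update (fun j => (⟪y, x j⟫ : ℂ)) i ⟪y, w⟫ := by
  funext j
  rcases eq_or_ne j i with rfl | hj
  · simp
  · simp [Function.update_of_ne hj]

noncomputable def Vml : MultilinearMap ℂ (fun _ : Fin n => E) T where
  toFun := Vfun M
  map_update_add' := by
    intro inst x i u v
    apply sub_eq_zero.mp
    apply model_eq_zero M
    intro y
    simp only [inner_sub_right, inner_add_right, inner_tpow_Vfun, prod_inner_update,
      inner_add_right]
    rw [Finset.prod_update_of_mem (Finset.mem_univ i),
      Finset.prod_update_of_mem (Finset.mem_univ i),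
      Finset.prod_update_of_mem (Finset.mem_univ i)]
    ring
  map_update_smul' := by
    intro inst x i a u
    apply sub_eq_zero.mp
    apply model_eq_zero M
    intro y
    simp only [inner_sub_right, inner_smul_right, inner_tpow_Vfun, prod_inner_update]
    rw [Finset.prod_update_of_mem (Finset.mem_univ i),
      Finset.prod_update_of_mem (Finset.mem_univ i)]
    ring

noncomputable def Vc : ContinuousMultilinearMap ℂ (fun _ : Fin n => E) T :=
  (Vml M).mkContinuous 1 (fun x => by
    rw [one_mul]; exact norm_Vfun_le M x)

lemma Vc_apply (x : Fin n → E) : Vc M x = Vfun M x := rfl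


end FockAux

/-- for `ψ ∈ Γ`, the function `ψ*(x) = ⟨(1-x)^{-⊗1} ∣ ψ⟩` is analytic on
the open unit ball and its `n`-th Taylor coefficient at `0` is the `n`-homogeneous
Hilbert-Schmidt polynomial `x ↦ ⟨x^{⊗n} ∣ ψₙ⟩` (paper's `⟨a∣b⟩` is Mathlib's `inner b a`). -/
theorem fock_function_analytic_taylor (E : Type) [NormedAddCommGroup E]
    [InnerProductSpace ℂ E] [CompleteSpace E]
    (T : ℕ → Type) [∀ n, NormedAddCommGroup (T n)] [∀ n, InnerProductSpace ℂ (T n)]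
    [∀ n, CompleteSpace (T n)]
    (M : ∀ n, SymPowModel E n (T n))
    (c : E → lp T 2) (hc : ∀ x : E, ‖x‖ < 1 → ∀ n, c x n = (M n).tpow x)
    (ψ : lp T 2) :
    AnalyticOnNhd ℂ (fun x : E => (inner ℂ ψ (c x) : ℂ)) (Metric.ball (0 : E) 1) ∧
      ∀ n : ℕ, ∀ x : E,
        ((n ! : ℂ))⁻¹ *
            iteratedFDeriv ℂ n (fun x : E => (inner ℂ ψ (c x) : ℂ)) 0 (fun _ => x) =
          (inner ℂ (ψ n) ((M n).tpow x) : ℂ) := by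
  classical
  set f : E → ℂ := fun x => (inner ℂ ψ (c x) : ℂ) with hf
  set p : FormalMultilinearSeries ℂ E ℂ := fun n =>
    (innerSL ℂ (ψ n)).compContinuousMultilinearMap (FockAux.Vc (M n)) with hp
  have hpn : ∀ (n : ℕ) (x : E), p n (fun _ => x) = (inner ℂ (ψ n) ((M n).tpow x) : ℂ) := by
    intro n x
    show (inner ℂ (ψ n) (FockAux.Vc (M n) (fun _ => x)) : ℂ) = _
    rw [FockAux.Vc_apply, FockAux.Vfun_diag]
  have hpnorm : ∀ n, ‖p n‖ ≤ ‖ψ n‖ := by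
    intro n
    refine ContinuousMultilinearMap.opNorm_le_bound (norm_nonneg _) fun m => ?_
    show ‖(inner ℂ (ψ n) (FockAux.Vc (M n) m) : ℂ)‖ ≤ _
    calc ‖(inner ℂ (ψ n) (FockAux.Vc (M n) m) : ℂ)‖
        ≤ ‖ψ n‖ * ‖FockAux.Vc (M n) m‖ := norm_inner_le_norm _ _
      _ ≤ ‖ψ n‖ * ∏ i, ‖m i‖ := by
          refine mul_le_mul_of_nonneg_left ?_ (norm_nonneg _)
          rw [FockAux.Vc_apply]
          exact FockAux.norm_Vfun_le (M n) m
  have hψn : ∀ n, ‖ψ n‖ ≤ ‖ψ‖ := fun n =>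
    lp.norm_apply_le_norm (by norm_num) ψ n
  have hrad : 1 ≤ p.radius := by
    refine ENNReal.le_of_forall_nnreal_lt fun r hr => ?_
    refine p.le_radius_of_bound ‖ψ‖ fun n => ?_
    have hr1 : (r : ℝ) ≤ 1 := le_of_lt (by exact_mod_cast hr)
    calc ‖p n‖ * (r : ℝ) ^ n ≤ ‖ψ‖ * 1 := by
          refine mul_le_mul ((hpnorm n).trans (hψn n)) ?_ (by positivity) (norm_nonneg _)
          exact pow_le_one₀ r.coe_nonneg hr1
      _ = ‖ψ‖ := mul_one _
  have hball : HasFPowerSeriesOnBall f p 0 1 :=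
    { r_le := hrad
      r_pos := one_pos
      hasSum := by
        intro y hy
        have hy' : ‖y‖ < 1 := by
          rw [mem_emetric_ball_zero_iff, ← ENNReal.coe_one, enorm_lt_coe] at hy
          exact_mod_cast hy
        have hs := lp.hasSum_inner (𝕜 := ℂ) ψ (c y)
        rw [zero_add]
        have heq : (fun n => p n fun _ => y) = fun n => (inner ℂ (ψ n) ((c y) n) : ℂ) :=
          funext fun n => by rw [hpn, hc y hy' n]
        rw [hf, heq]
        exact hs
      }
  constructor
  · have h := hball.analyticOnNhd
    have hset : Metric.eball (0 : E) 1 = Metric.ball (0 : E) 1 := by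
      ext z
      rw [mem_emetric_ball_zero_iff, ← ENNReal.coe_one, enorm_lt_coe, Metric.mem_ball, dist_zero_right]
      constructor <;> intro hz <;> exact_mod_cast hz
    rwa [hset] at h
  · intro n x
    have h1 := hball.factorial_smul x n
    rw [← h1, hpn, nsmul_eq_mul, ← mul_assoc,
      inv_mul_cancel₀ (by exact_mod_cast n.factorial_ne_zero), one_mul]
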